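/- arXiv:2509.05257 — 2 statements merged into one kernel-verified Lean document; each statement's English description precedes it below -/
import Mathlib

section
/- A block matrix M = [[A, B], [B*, C]] is positive semidefinite if and only if A ≥ 0, (I − A A⁻¹) B = 0, and C ≥ B* A⁻¹ B, where A⁻¹ denotes the Moore–Penrose pseudoinverse. -/
open Matrix Kronecker
open scoped ComplexOrder

noncomputable section
attribute [local instance] Classical.propDecidable

/-- Moore–Penrose pseudoinverse of a square complex matrix. -/
def pinv {n : Type*} [Fintype n] [DecidableEq n] (A : Matrix n n ℂ) : Matrix n n ℂ :=
  if h : ∃ B : Matrix n n ℂ,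
      A * B * A = A ∧ B * A * B = B ∧ (A * B)ᴴ = A * B ∧ (B * A)ᴴ = B * A
  then h.choose else 0

/-- Positive semidefinite square root (junk value `0` if the matrix is not PSD). -/
def msqrt {n : Type*} [Fintype n] [DecidableEq n] (A : Matrix n n ℂ) : Matrix n n ℂ :=
  if h : A.PosSemidef then
    (h.1.eigenvectorUnitary : Matrix n n ℂ) * diagonal ((↑) ∘ (√·) ∘ h.1.eigenvalues) *
      (star h.1.eigenvectorUnitary : Matrix n n ℂ)
  else 0

/-- `sgn(X) = U sgn(Σ) V*` for an SVD `X = U Σ V*`; equivalently `X (X* X)^{-1/2}`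
with the Moore–Penrose pseudoinverse. -/
def msgn {n : Type*} [Fintype n] [DecidableEq n] (X : Matrix n n ℂ) : Matrix n n ℂ :=
  X * pinv (msqrt (Xᴴ * X))

/-- Matrix geometric mean `A # B = A^{1/2} (A^{-1/2} B A^{-1/2})^{1/2} A^{1/2}`
(with Moore–Penrose pseudoinverses). -/
def geo {n : Type*} [Fintype n] [DecidableEq n] (A B : Matrix n n ℂ) : Matrix n n ℂ :=
  msqrt A * msqrt (pinv (msqrt A) * B * pinv (msqrt A)) * msqrt A

/-- The unnormalized maximally entangled state `|Ω⟩ = ∑ i, |i⟩ ⊗ |i⟩`. -/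
def omegaVec (d : ℕ) : Fin d × Fin d → ℂ := fun p => if p.1 = p.2 then 1 else 0

/-- Reduced density matrix of `|C⟩⟨C|` on the first subsystem
(partial trace over the second subsystem). -/
def reducedA {d : ℕ} (C : Fin d × Fin d → ℂ) : Matrix (Fin d) (Fin d) ℂ :=
  Matrix.of fun i j => ∑ k, C (i, k) * star (C (j, k))

/-- Partial trace over the first subsystem of the operator `|D⟩⟨C|`. -/
def trA {d : ℕ} (D C : Fin d × Fin d → ℂ) : Matrix (Fin d) (Fin d) ℂ :=
  Matrix.of fun j l => ∑ i, D (i, j) * star (C (i, l))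

/-- `ℓ²→ℓ²` operator norm (largest singular value). -/
def opNorm {n : Type*} [Fintype n] [DecidableEq n] (A : Matrix n n ℂ) : ℝ :=
  ‖(Matrix.toEuclideanCLM (𝕜 := ℂ) A : EuclideanSpace ℂ n →L[ℂ] EuclideanSpace ℂ n)‖

/-- `P` is the orthogonal projection onto the image (column space) of `A`. -/
def IsOrthProjOnto {n : Type*} [Fintype n] [DecidableEq n] (P A : Matrix n n ℂ) : Prop :=
  Pᴴ = P ∧ P * P = P ∧ LinearMap.range P.mulVecLin = LinearMap.range A.mulVecLin

/-- `η` is the smallest nonzero eigenvalue of the Hermitian matrix `M`. -/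
def IsSmallestNonzeroEigenvalue {n : Type*} [Fintype n] [DecidableEq n]
    (M : Matrix n n ℂ) (η : ℝ) : Prop :=
  ∃ hM : M.IsHermitian, η ≠ 0 ∧ (∃ i, hM.eigenvalues i = η) ∧
    ∀ i, hM.eigenvalues i ≠ 0 → η ≤ hM.eigenvalues i

section SchurAux
variable {n : Type*} [Fintype n] [DecidableEq n]

/-- Uniqueness of the Moore–Penrose pseudoinverse. -/
lemma mp_unique {A B₁ B₂ : Matrix n n ℂ}
    (h1 : A * B₁ * A = A) (h2 : B₁ * A * B₁ = B₁) (h3 : (A * B₁)ᴴ = A * B₁)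
    (h4 : (B₁ * A)ᴴ = B₁ * A)
    (k1 : A * B₂ * A = A) (k2 : B₂ * A * B₂ = B₂) (k3 : (A * B₂)ᴴ = A * B₂)
    (k4 : (B₂ * A)ᴴ = B₂ * A) :
    B₁ = B₂ := by
  have hAB : A * B₁ = A * B₂ := by
    calc A * B₁ = (A * B₁)ᴴ := h3.symm
    _ = ((A * B₂ * A) * B₁)ᴴ := by rw [k1]
    _ = ((A * B₂) * (A * B₁))ᴴ := by noncomm_ring
    _ = (A * B₁)ᴴ * (A * B₂)ᴴ := by rw [conjTranspose_mul]
    _ = (A * B₁) * (A * B₂) := by rw [h3, k3]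
    _ = (A * B₁ * A) * B₂ := by noncomm_ring
    _ = A * B₂ := by rw [h1]
  have hBA : B₁ * A = B₂ * A := by
    calc B₁ * A = (B₁ * A)ᴴ := h4.symm
    _ = (B₁ * (A * B₂ * A))ᴴ := by rw [k1]
    _ = ((B₁ * A) * (B₂ * A))ᴴ := by rw [show B₁ * (A * B₂ * A) = (B₁ * A) * (B₂ * A) from by noncomm_ring]
    _ = (B₂ * A)ᴴ * (B₁ * A)ᴴ := by rw [conjTranspose_mul]
    _ = (B₂ * A) * (B₁ * A) := by rw [h4, k4]
    _ = B₂ * (A * B₁ * A) := by noncomm_ring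
    _ = B₂ * A := by rw [h1]
  calc B₁ = B₁ * A * B₁ := h2.symm
  _ = B₂ * A * B₁ := by rw [hBA]
  _ = B₂ * (A * B₁) := by rw [mul_assoc]
  _ = B₂ * (A * B₂) := by rw [hAB]
  _ = B₂ * A * B₂ := by rw [mul_assoc]
  _ = B₂ := k2

/-- Existence of the Moore–Penrose pseudoinverse for PSD matrices. -/
lemma exists_mp {A : Matrix n n ℂ} (hA : A.PosSemidef) :
    ∃ B : Matrix n n ℂ,
      A * B * A = A ∧ B * A * B = B ∧ (A * B)ᴴ = A * B ∧ (B * A)ᴴ = B * A := by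
  have hH := hA.isHermitian
  set U : Matrix n n ℂ := (hH.eigenvectorUnitary : Matrix n n ℂ) with hUdef
  have hU : star U * U = 1 := Matrix.mem_unitaryGroup_iff'.mp hH.eigenvectorUnitary.2
  set d : n → ℝ := hH.eigenvalues with hd
  set g : n → ℝ := fun i => if d i = 0 then 0 else (d i)⁻¹ with hg
  set D : Matrix n n ℂ := diagonal (fun i => ((d i : ℝ) : ℂ)) with hD
  set G : Matrix n n ℂ := diagonal (fun i => ((g i : ℝ) : ℂ)) with hG
  have hAeq : A = U * D * star U := by
    rw [hD]; exact hH.spectral_theorem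
  have key : ∀ X Y : Matrix n n ℂ, (U * X * star U) * (U * Y * star U)
      = U * (X * Y) * star U := by
    intro X Y
    calc (U * X * star U) * (U * Y * star U)
        = U * (X * ((star U * U) * (Y * star U))) := by simp only [mul_assoc]
      _ = U * (X * Y) * star U := by rw [hU, one_mul]; noncomm_ring
  have hdg : ∀ i, ((d i : ℝ) : ℂ) * ((g i : ℝ) : ℂ) * ((d i : ℝ) : ℂ) = ((d i : ℝ) : ℂ) := by
    intro i
    by_cases h : d i = 0
    · simp [hg, h]
    · have h' : ((d i : ℝ) : ℂ) ≠ 0 := by exact_mod_cast h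
      simp only [hg, if_neg h, Complex.ofReal_inv]
      field_simp
  have hgd : ∀ i, ((g i : ℝ) : ℂ) * ((d i : ℝ) : ℂ) * ((g i : ℝ) : ℂ) = ((g i : ℝ) : ℂ) := by
    intro i
    by_cases h : d i = 0
    · simp [hg, h]
    · have h' : ((d i : ℝ) : ℂ) ≠ 0 := by exact_mod_cast h
      simp only [hg, if_neg h, Complex.ofReal_inv]
      field_simp
  have hDGD : D * G * D = D := by
    rw [hD, hG, diagonal_mul_diagonal, diagonal_mul_diagonal]
    exact congrArg Matrix.diagonal (funext hdg)
  have hGDG : G * D * G = G := by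
    rw [hD, hG, diagonal_mul_diagonal, diagonal_mul_diagonal]
    exact congrArg Matrix.diagonal (funext hgd)
  have hreal : ∀ f : n → ℂ, (∀ i, star (f i) = f i) → (diagonal f)ᴴ = diagonal f := by
    intro f hf
    rw [diagonal_conjTranspose]
    exact congrArg Matrix.diagonal (funext fun i => hf i)
  have hherm : ∀ X : Matrix n n ℂ, Xᴴ = X → (U * X * star U)ᴴ = U * X * star U := by
    intro X hX
    calc (U * X * star U)ᴴ = (star U)ᴴ * (Xᴴ * Uᴴ) := by
          rw [conjTranspose_mul, conjTranspose_mul]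
      _ = U * X * star U := by
          rw [hX, star_eq_conjTranspose, conjTranspose_conjTranspose, mul_assoc]
  refine ⟨U * G * star U, ?_, ?_, ?_, ?_⟩
  · rw [hAeq, key, key, mul_assoc D, ← mul_assoc D, hDGD]
  · rw [hAeq, key, key, mul_assoc G, ← mul_assoc G, hGDG]
  · rw [hAeq, key, hD, hG, diagonal_mul_diagonal]
    refine hherm _ (hreal _ fun i => ?_)
    simp [Complex.conj_ofReal]
  · rw [hAeq, key, hD, hG, diagonal_mul_diagonal]
    refine hherm _ (hreal _ fun i => ?_)
    simp [Complex.conj_ofReal]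

lemma pinv_spec {A : Matrix n n ℂ} (hA : A.PosSemidef) :
    A * pinv A * A = A ∧ pinv A * A * pinv A = pinv A ∧
      (A * pinv A)ᴴ = A * pinv A ∧ (pinv A * A)ᴴ = pinv A * A := by
  have h := exists_mp hA
  rw [pinv, dif_pos h]
  exact h.choose_spec

lemma pinv_herm {A : Matrix n n ℂ} (hA : A.PosSemidef) : (pinv A)ᴴ = pinv A := by
  obtain ⟨e1, e2, e3, e4⟩ := pinv_spec hA
  have hH : Aᴴ = A := hA.isHermitian
  refine mp_unique ?_ ?_ ?_ ?_ e1 e2 e3 e4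
  · calc A * (pinv A)ᴴ * A
        = (Aᴴ * pinv A * Aᴴ)ᴴ := by simp [conjTranspose_mul, mul_assoc]
      _ = A := by rw [hH, e1, hH]
  · calc (pinv A)ᴴ * A * (pinv A)ᴴ
        = (pinv A * Aᴴ * pinv A)ᴴ := by simp [conjTranspose_mul, mul_assoc]
      _ = (pinv A)ᴴ := by rw [hH, e2]
  · calc (A * (pinv A)ᴴ)ᴴ
        = pinv A * Aᴴ := by simp [conjTranspose_mul]
      _ = pinv A * A := by rw [hH]
      _ = (pinv A * A)ᴴ := e4.symm
      _ = Aᴴ * (pinv A)ᴴ := conjTranspose_mul _ _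
      _ = A * (pinv A)ᴴ := by rw [hH]
  · calc ((pinv A)ᴴ * A)ᴴ
        = Aᴴ * pinv A := by simp [conjTranspose_mul]
      _ = A * pinv A := by rw [hH]
      _ = (A * pinv A)ᴴ := e3.symm
      _ = (pinv A)ᴴ * Aᴴ := conjTranspose_mul _ _
      _ = (pinv A)ᴴ * A := by rw [hH]

open scoped MatrixOrder Matrix.Norms.L2Operator in
lemma posSemidef_iff_eq_transpose_mul_self {A : Matrix n n ℂ} :
    A.PosSemidef ↔ ∃ B : Matrix n n ℂ, A = Bᴴ * B := by
  constructor
  · intro hA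
    obtain ⟨B, hB⟩ := CStarAlgebra.nonneg_iff_eq_star_mul_self.mp hA.nonneg
    exact ⟨B, hB⟩
  · rintro ⟨B, rfl⟩
    exact posSemidef_conjTranspose_mul_self B

end SchurAux

theorem schur_complement_psd {m n : Type*} [Fintype m] [Fintype n]
    [DecidableEq m] [DecidableEq n]
    (A : Matrix m m ℂ) (B : Matrix m n ℂ) (C : Matrix n n ℂ) :
    (Matrix.fromBlocks A B Bᴴ C).PosSemidef ↔
      A.PosSemidef ∧ (1 - A * pinv A) * B = 0 ∧ (C - Bᴴ * pinv A * B).PosSemidef := by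
  constructor
  · intro hM
    obtain ⟨X, hX⟩ := posSemidef_iff_eq_transpose_mul_self.mp hM
    set X₁ : Matrix (m ⊕ n) m ℂ := X.submatrix id Sum.inl with hX1
    set X₂ : Matrix (m ⊕ n) n ℂ := X.submatrix id Sum.inr with hX2
    have hA : A = X₁ᴴ * X₁ := by
      ext i j
      have h := congrFun (congrFun hX (Sum.inl i)) (Sum.inl j)
      simpa [Matrix.mul_apply, hX1] using h
    have hB : B = X₁ᴴ * X₂ := by
      ext i j
      have h := congrFun (congrFun hX (Sum.inl i)) (Sum.inr j)
      simpa [Matrix.mul_apply, hX1, hX2] using h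
    have hC : C = X₂ᴴ * X₂ := by
      ext i j
      have h := congrFun (congrFun hX (Sum.inr i)) (Sum.inr j)
      simpa [Matrix.mul_apply, hX2] using h
    have hApsd : A.PosSemidef := hA ▸ posSemidef_conjTranspose_mul_self X₁
    obtain ⟨e1, e2, e3, e4⟩ := pinv_spec hApsd
    have hph : (pinv A)ᴴ = pinv A := pinv_herm hApsd
    set p : Matrix m m ℂ := pinv A with hp
    have hxx : X₁ᴴ * X₁ = A := hA.symm
    have hPX : A * p * X₁ᴴ * X₁ = A := by
      rw [Matrix.mul_assoc (A * p) X₁ᴴ X₁, hxx]; exact e1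
    have hY : (A * p * X₁ᴴ - X₁ᴴ) * (A * p * X₁ᴴ - X₁ᴴ)ᴴ = 0 := by
      have hct : (A * p * X₁ᴴ - X₁ᴴ)ᴴ = X₁ * (A * p) - X₁ := by
        rw [conjTranspose_sub, conjTranspose_mul, conjTranspose_conjTranspose, e3]
      rw [hct, Matrix.sub_mul, Matrix.mul_sub, Matrix.mul_sub,
        ← Matrix.mul_assoc (A * p * X₁ᴴ) X₁ (A * p), hPX,
        ← Matrix.mul_assoc X₁ᴴ X₁ (A * p), hxx]
      abel
    have hproj : A * p * X₁ᴴ = X₁ᴴ :=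
      sub_eq_zero.mp (self_mul_conjTranspose_eq_zero.mp hY)
    refine ⟨hApsd, ?_, ?_⟩
    · rw [Matrix.sub_mul, Matrix.one_mul, hB,
        ← Matrix.mul_assoc (A * p) X₁ᴴ X₂, hproj, sub_self]
    · set P' : Matrix (m ⊕ n) (m ⊕ n) ℂ := X₁ * p * X₁ᴴ with hP'
      set Z : Matrix (m ⊕ n) n ℂ := (1 - P') * X₂ with hZ
      have hP'h : P'ᴴ = P' := by
        rw [hP', conjTranspose_mul, conjTranspose_mul, conjTranspose_conjTranspose,
          hph, Matrix.mul_assoc]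
      have hP'2 : P' * P' = P' := by
        calc P' * P' = X₁ * (p * (X₁ᴴ * X₁) * p) * X₁ᴴ := by
              rw [hP']; simp only [Matrix.mul_assoc]
          _ = X₁ * (p * A * p) * X₁ᴴ := by rw [hxx]
          _ = P' := by rw [e2, hP']
      have h11 : (1 - P') * (1 - P') = 1 - P' := by
        rw [Matrix.sub_mul, Matrix.one_mul, Matrix.mul_sub, Matrix.mul_one, hP'2]
        abel
      have hZh : Zᴴ = X₂ᴴ * (1 - P') := by
        rw [hZ, conjTranspose_mul, conjTranspose_sub, conjTranspose_one, hP'h]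
      have key : C - Bᴴ * p * B = Zᴴ * Z := by
        calc C - Bᴴ * p * B
            = X₂ᴴ * X₂ - X₂ᴴ * (P' * X₂) := by
              rw [hC, hB, conjTranspose_mul, conjTranspose_conjTranspose, hP']
              simp only [Matrix.mul_assoc]
          _ = X₂ᴴ * ((1 - P') * X₂) := by
              rw [Matrix.sub_mul, Matrix.one_mul, Matrix.mul_sub]
          _ = X₂ᴴ * ((1 - P') * ((1 - P') * X₂)) := by
              rw [← Matrix.mul_assoc (1 - P') (1 - P') X₂, h11]
          _ = Zᴴ * Z := by rw [hZh, hZ]; simp only [Matrix.mul_assoc]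
      rw [key]
      exact posSemidef_conjTranspose_mul_self Z
  · rintro ⟨hA, hQB, hS⟩
    obtain ⟨e1, e2, e3, e4⟩ := pinv_spec hA
    have hph : (pinv A)ᴴ = pinv A := pinv_herm hA
    have hH : Aᴴ = A := hA.isHermitian
    set p : Matrix m m ℂ := pinv A with hp
    have hB : A * p * B = B := by
      rw [Matrix.sub_mul, Matrix.one_mul, sub_eq_zero] at hQB
      exact hQB.symm
    set S : Matrix n n ℂ := C - Bᴴ * p * B with hSdef
    set L : Matrix (m ⊕ n) (m ⊕ n) ℂ := fromBlocks 1 (p * B) 0 1 with hL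
    set N : Matrix (m ⊕ n) (m ⊕ n) ℂ := fromBlocks A 0 0 S with hN
    have hNpsd : N.PosSemidef := by
      obtain ⟨A₁, hA₁⟩ := posSemidef_iff_eq_transpose_mul_self.mp hA
      obtain ⟨S₁, hS₁⟩ := posSemidef_iff_eq_transpose_mul_self.mp hS
      have hfac : N = (fromBlocks A₁ 0 0 S₁)ᴴ * (fromBlocks A₁ 0 0 S₁) := by
        rw [hN, fromBlocks_conjTranspose, fromBlocks_multiply]
        simp [← hA₁, ← hS₁]
      rw [hfac]
      exact posSemidef_conjTranspose_mul_self _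
    have hL1 : A * (p * B) = B := by rw [← Matrix.mul_assoc]; exact hB
    have hL2 : (p * B)ᴴ * A = Bᴴ := by
      have h' : Aᴴ * (p * B) = B := by rw [hH, ← Matrix.mul_assoc]; exact hB
      have h'' : (Aᴴ * (p * B))ᴴ = (p * B)ᴴ * A := by
        rw [conjTranspose_mul, conjTranspose_conjTranspose]
      rw [← h'', h']
    have hL3 : (p * B)ᴴ * A * (p * B) + S = C := by
      rw [hL2, ← Matrix.mul_assoc, hSdef]
      abel
    have hMeq : fromBlocks A B Bᴴ C = Lᴴ * N * L := by
      rw [hL, hN, fromBlocks_conjTranspose, fromBlocks_multiply, fromBlocks_multiply]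
      simp only [Matrix.mul_zero, Matrix.zero_mul, Matrix.mul_one, Matrix.one_mul,
        add_zero, zero_add, conjTranspose_zero, conjTranspose_one]
      rw [hL1, hL3, hL2]
    rw [hMeq]
    exact hNpsd.conjTranspose_mul_mul_same L
end
end

section
/- If X is invertible and A, B are positive definite, then X (A # B) X^{-1} = (X A X^{-1}) # (X B X^{-1}) when all conjugated matrices remain positive definite (e.g. when X is such that X A X^{-1} and X B X^{-1} are positive definite). -/
open Matrix Kronecker
open scoped ComplexOrder

noncomputable section
attribute [local instance] Classical.propDecidable

section Aux
variable {n : Type*} [Fintype n] [DecidableEq n]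

open scoped MatrixOrder in
lemma msqrt_eq {A : Matrix n n ℂ} (hA : A.PosSemidef) : msqrt A = CFC.sqrt A := by
  rw [CFC.sqrt_eq_cfc, cfc_nnreal_eq_real _ A hA.nonneg, hA.1.cfc_eq, msqrt, dif_pos hA,
    IsHermitian.cfc, Unitary.conjStarAlgAut_apply]
  congr 3
  funext i
  simp [Real.coe_sqrt, Real.coe_toNNReal', max_eq_left (hA.eigenvalues_nonneg i)]

open scoped MatrixOrder in
lemma msqrt_posSemidef {A : Matrix n n ℂ} (hA : A.PosSemidef) : (msqrt A).PosSemidef := by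
  rw [msqrt_eq hA]; exact (CFC.sqrt_nonneg A).posSemidef

open scoped MatrixOrder in
lemma msqrt_mul_self {A : Matrix n n ℂ} (hA : A.PosSemidef) : msqrt A * msqrt A = A := by
  rw [msqrt_eq hA]; exact CFC.sqrt_mul_sqrt_self A hA.nonneg

open scoped MatrixOrder in
lemma msqrt_unique {A S : Matrix n n ℂ} (hA : A.PosSemidef) (hS : S.PosSemidef)
    (h : S * S = A) : msqrt A = S := by
  rw [msqrt_eq hA]
  exact CFC.sqrt_unique h hS.nonneg

lemma msqrt_isUnit {A : Matrix n n ℂ} (hA : A.PosSemidef) (hU : IsUnit A) :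
    IsUnit (msqrt A) := by
  rw [Matrix.isUnit_iff_isUnit_det, isUnit_iff_ne_zero] at hU ⊢
  intro h
  apply hU
  rw [← msqrt_mul_self hA, Matrix.det_mul, h, mul_zero]

lemma pinv_eq_inv {A : Matrix n n ℂ} (hA : IsUnit A) : pinv A = A⁻¹ := by
  have hd : IsUnit A.det := (Matrix.isUnit_iff_isUnit_det A).mp hA
  have h1 : A * A⁻¹ = 1 := Matrix.mul_nonsing_inv A hd
  have h2 : A⁻¹ * A = 1 := Matrix.nonsing_inv_mul A hd
  have hex : ∃ B : Matrix n n ℂ,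
      A * B * A = A ∧ B * A * B = B ∧ (A * B)ᴴ = A * B ∧ (B * A)ᴴ = B * A :=
    ⟨A⁻¹, by rw [h1, Matrix.one_mul], by rw [h2, Matrix.one_mul],
      by rw [h1]; simp, by rw [h2]; simp⟩
  rw [pinv, dif_pos hex]
  have spec := hex.choose_spec.1
  have key : A⁻¹ * (A * hex.choose * A) * A⁻¹ = hex.choose := by
    simp only [← Matrix.mul_assoc]
    rw [h2, Matrix.one_mul, Matrix.mul_assoc, h1, Matrix.mul_one]
  calc hex.choose = A⁻¹ * (A * hex.choose * A) * A⁻¹ := key.symm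
    _ = A⁻¹ * A * A⁻¹ := by rw [spec]
    _ = A⁻¹ := by rw [h2, Matrix.one_mul]

lemma commute_inv {A C : Matrix n n ℂ} (hA : IsUnit A) (h : C * A = A * C) :
    C * A⁻¹ = A⁻¹ * C := by
  have hd : IsUnit A.det := (Matrix.isUnit_iff_isUnit_det A).mp hA
  have h1 : A * A⁻¹ = 1 := Matrix.mul_nonsing_inv A hd
  have h2 : A⁻¹ * A = 1 := Matrix.nonsing_inv_mul A hd
  calc C * A⁻¹ = A⁻¹ * A * C * A⁻¹ := by rw [h2, Matrix.one_mul]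
    _ = A⁻¹ * (C * A) * A⁻¹ := by rw [h]; simp only [Matrix.mul_assoc]
    _ = A⁻¹ * C * (A * A⁻¹) := by simp only [Matrix.mul_assoc]
    _ = A⁻¹ * C := by rw [h1, Matrix.mul_one]

lemma diag_form {S : Matrix n n ℂ} (hS : S.PosSemidef) :
    ∃ (V : Matrix n n ℂ) (d : n → ℝ), V * star V = 1 ∧ star V * V = 1 ∧
      S = V * Matrix.diagonal (fun i => (d i : ℂ)) * star V ∧ ∀ i, 0 ≤ d i := by
  have hH : S.IsHermitian := hS.1
  exact ⟨hH.eigenvectorUnitary, hH.eigenvalues,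
    Matrix.mem_unitaryGroup_iff.mp hH.eigenvectorUnitary.2,
    Matrix.mem_unitaryGroup_iff'.mp hH.eigenvectorUnitary.2,
    hH.spectral_theorem, hS.eigenvalues_nonneg⟩

lemma commute_msqrt {M C : Matrix n n ℂ} (hM : M.PosSemidef) (h : C * M = M * C) :
    C * msqrt M = msqrt M * C := by
  have hS : (msqrt M).PosSemidef := msqrt_posSemidef hM
  have hSS : msqrt M * msqrt M = M := msqrt_mul_self hM
  obtain ⟨V, d, hVV, hV'V, hSpec, hd⟩ := diag_form hS
  set e : n → ℂ := fun i => (d i : ℂ) with he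
  have collapse : ∀ Y Z : Matrix n n ℂ,
      (V * Y * star V) * (V * Z * star V) = V * (Y * Z) * star V := by
    intro Y Z
    calc (V * Y * star V) * (V * Z * star V) = V * Y * (star V * V) * Z * star V := by
          simp only [Matrix.mul_assoc]
      _ = V * (Y * Z) * star V := by
          rw [hV'V]; simp only [Matrix.mul_assoc, Matrix.mul_one, Matrix.one_mul]
  have expand : ∀ Y : Matrix n n ℂ, V * (star V * Y * V) * star V = Y := by
    intro Y
    calc V * (star V * Y * V) * star V = (V * star V) * Y * (V * star V) := by
          simp only [Matrix.mul_assoc]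
      _ = Y := by rw [hVV, Matrix.one_mul, Matrix.mul_one]
  have hMeq : M = V * (Matrix.diagonal e * Matrix.diagonal e) * star V := by
    rw [← hSS, hSpec, collapse]
  have key : (star V * C * V) * (Matrix.diagonal e * Matrix.diagonal e)
      = (Matrix.diagonal e * Matrix.diagonal e) * (star V * C * V) := by
    have s1 : (star V * C * V) * (Matrix.diagonal e * Matrix.diagonal e)
        = star V * (C * M) * V := by
      rw [hMeq]; simp only [Matrix.mul_assoc, hV'V, Matrix.mul_one]
    have s2 : (Matrix.diagonal e * Matrix.diagonal e) * (star V * C * V)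
        = star V * (M * C) * V := by
      rw [hMeq]; simp only [← Matrix.mul_assoc, hV'V, Matrix.one_mul]
    rw [s1, s2, h]
  have key2 : (star V * C * V) * Matrix.diagonal e
      = Matrix.diagonal e * (star V * C * V) := by
    rw [Matrix.diagonal_mul_diagonal] at key
    ext i j
    have hk := Matrix.ext_iff.mpr key i j
    simp only [Matrix.mul_diagonal, Matrix.diagonal_mul, Pi.mul_apply] at hk ⊢
    by_cases hc : (star V * C * V) i j = 0
    · rw [hc, zero_mul, mul_zero]
    · have hee : e j * e j = e i * e i := by
        apply mul_left_cancel₀ hc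
        rw [hk]; ring
      have hdd : d j * d j = d i * d i := by
        have h' : ((d j * d j : ℝ) : ℂ) = ((d i * d i : ℝ) : ℂ) := by
          push_cast
          simpa [he] using hee
        exact_mod_cast h'
      have hdji : d j = d i := by
        have h1 := Real.sqrt_mul_self (hd j)
        have h2 := Real.sqrt_mul_self (hd i)
        rw [← h1, ← h2, hdd]
      simp only [he, hdji]
      ring
  calc C * msqrt M
      = (V * (star V * C * V) * star V) * (V * Matrix.diagonal e * star V) := by
        rw [expand, ← hSpec]
    _ = V * ((star V * C * V) * Matrix.diagonal e) * star V := collapse _ _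
    _ = V * (Matrix.diagonal e * (star V * C * V)) * star V := by rw [key2]
    _ = (V * Matrix.diagonal e * star V) * (V * (star V * C * V) * star V) :=
        (collapse _ _).symm
    _ = msqrt M * C := by rw [expand, ← hSpec]

end Aux

section Aux2
variable {n : Type*} [Fintype n] [DecidableEq n]

lemma msqrt_conj {A U : Matrix n n ℂ} (hA : A.PosSemidef)
    (hU1 : U * Uᴴ = 1) (hU2 : Uᴴ * U = 1) :
    msqrt (U * A * Uᴴ) = U * msqrt A * Uᴴ := by
  have hS := msqrt_posSemidef hA
  have hA' : (U * A * Uᴴ).PosSemidef := hA.mul_mul_conjTranspose_same U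
  have hS' : (U * msqrt A * Uᴴ).PosSemidef := hS.mul_mul_conjTranspose_same U
  apply msqrt_unique hA' hS'
  calc (U * msqrt A * Uᴴ) * (U * msqrt A * Uᴴ)
      = U * msqrt A * (Uᴴ * U) * msqrt A * Uᴴ := by simp only [Matrix.mul_assoc]
    _ = U * (msqrt A * msqrt A) * Uᴴ := by
        rw [hU2]; simp only [Matrix.mul_assoc, Matrix.mul_one, Matrix.one_mul]
    _ = U * A * Uᴴ := by rw [msqrt_mul_self hA]

lemma geo_commute {A B S : Matrix n n ℂ} (hA : A.PosDef) (hB : B.PosSemidef)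
    (hAS : S * A = A * S) (hBS : S * B = B * S) : S * geo A B = geo A B * S := by
  have hApsd := hA.posSemidef
  have hTu : IsUnit (msqrt A) := msqrt_isUnit hApsd hA.isUnit
  have h1 : S * msqrt A = msqrt A * S := commute_msqrt hApsd hAS
  have h2 : S * (msqrt A)⁻¹ = (msqrt A)⁻¹ * S := commute_inv hTu h1
  have hTH : ((msqrt A)⁻¹)ᴴ = (msqrt A)⁻¹ := by
    rw [Matrix.conjTranspose_nonsing_inv, (msqrt_posSemidef hApsd).isHermitian.eq]
  have hinner : ((msqrt A)⁻¹ * B * (msqrt A)⁻¹).PosSemidef := by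
    have := hB.conjTranspose_mul_mul_same (msqrt A)⁻¹
    rwa [hTH] at this
  have h3 : S * ((msqrt A)⁻¹ * B * (msqrt A)⁻¹) = ((msqrt A)⁻¹ * B * (msqrt A)⁻¹) * S := by
    calc S * ((msqrt A)⁻¹ * B * (msqrt A)⁻¹)
        = (S * (msqrt A)⁻¹) * B * (msqrt A)⁻¹ := by simp only [Matrix.mul_assoc]
      _ = (msqrt A)⁻¹ * (S * B) * (msqrt A)⁻¹ := by rw [h2]; simp only [Matrix.mul_assoc]
      _ = (msqrt A)⁻¹ * (B * S) * (msqrt A)⁻¹ := by rw [hBS]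
      _ = (msqrt A)⁻¹ * B * (S * (msqrt A)⁻¹) := by simp only [Matrix.mul_assoc]
      _ = (msqrt A)⁻¹ * B * (msqrt A)⁻¹ * S := by rw [h2]; simp only [Matrix.mul_assoc]
  have h4 := commute_msqrt hinner h3
  simp only [geo, pinv_eq_inv hTu]
  calc S * (msqrt A * msqrt ((msqrt A)⁻¹ * B * (msqrt A)⁻¹) * msqrt A)
      = (S * msqrt A) * msqrt ((msqrt A)⁻¹ * B * (msqrt A)⁻¹) * msqrt A := by
        simp only [Matrix.mul_assoc]
    _ = msqrt A * (S * msqrt ((msqrt A)⁻¹ * B * (msqrt A)⁻¹)) * msqrt A := by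
        rw [h1]; simp only [Matrix.mul_assoc]
    _ = msqrt A * (msqrt ((msqrt A)⁻¹ * B * (msqrt A)⁻¹) * S) * msqrt A := by rw [h4]
    _ = msqrt A * msqrt ((msqrt A)⁻¹ * B * (msqrt A)⁻¹) * (S * msqrt A) := by
        simp only [Matrix.mul_assoc]
    _ = msqrt A * msqrt ((msqrt A)⁻¹ * B * (msqrt A)⁻¹) * msqrt A * S := by
        rw [h1]; simp only [Matrix.mul_assoc]

lemma geo_conj_unitary {A B U : Matrix n n ℂ} (hA : A.PosDef) (hB : B.PosSemidef)
    (hU1 : U * Uᴴ = 1) (hU2 : Uᴴ * U = 1) :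
    geo (U * A * Uᴴ) (U * B * Uᴴ) = U * geo A B * Uᴴ := by
  have hApsd := hA.posSemidef
  have hSA : (msqrt A).PosSemidef := msqrt_posSemidef hApsd
  have hSAu : IsUnit (msqrt A) := msqrt_isUnit hApsd hA.isUnit
  have hSAd : IsUnit (msqrt A).det := (Matrix.isUnit_iff_isUnit_det _).mp hSAu
  have hUu : IsUnit U := ⟨⟨U, Uᴴ, hU1, mul_eq_one_comm.mp hU1⟩, rfl⟩
  have hUHu : IsUnit Uᴴ := ⟨⟨Uᴴ, U, hU2, mul_eq_one_comm.mp hU2⟩, rfl⟩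
  have collapse : ∀ Y Z : Matrix n n ℂ,
      (U * Y * Uᴴ) * (U * Z * Uᴴ) = U * (Y * Z) * Uᴴ := by
    intro Y Z
    calc (U * Y * Uᴴ) * (U * Z * Uᴴ) = U * Y * (Uᴴ * U) * Z * Uᴴ := by
          simp only [Matrix.mul_assoc]
      _ = U * (Y * Z) * Uᴴ := by
          rw [hU2]; simp only [Matrix.mul_assoc, Matrix.mul_one, Matrix.one_mul]
  have h1 : msqrt (U * A * Uᴴ) = U * msqrt A * Uᴴ := msqrt_conj hApsd hU1 hU2
  have hinv : (U * msqrt A * Uᴴ)⁻¹ = U * (msqrt A)⁻¹ * Uᴴ := by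
    apply Matrix.inv_eq_right_inv
    rw [collapse, Matrix.mul_nonsing_inv _ hSAd, Matrix.mul_one, hU1]
  have h2 : pinv (U * msqrt A * Uᴴ) = U * (msqrt A)⁻¹ * Uᴴ := by
    rw [pinv_eq_inv ((hUu.mul hSAu).mul hUHu), hinv]
  have hTH : ((msqrt A)⁻¹)ᴴ = (msqrt A)⁻¹ := by
    rw [Matrix.conjTranspose_nonsing_inv, hSA.isHermitian.eq]
  have hinner : ((msqrt A)⁻¹ * B * (msqrt A)⁻¹).PosSemidef := by
    have := hB.conjTranspose_mul_mul_same (msqrt A)⁻¹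
    rwa [hTH] at this
  simp only [geo]
  rw [h1, h2, pinv_eq_inv hSAu, collapse, collapse, msqrt_conj hinner hU1 hU2,
    collapse, collapse]

lemma main_aux {A B X S : Matrix n n ℂ} (hA : A.PosDef) (hB : B.PosDef)
    (hXd : IsUnit X.det) (hSu : IsUnit S) (hSH : Sᴴ = S) (hSS : S * S = Xᴴ * X)
    (hAS : A * S = S * A) (hBS : B * S = S * B) :
    X * geo A B * X⁻¹ = geo (X * A * X⁻¹) (X * B * X⁻¹) := by
  have hSd : IsUnit S.det := (Matrix.isUnit_iff_isUnit_det S).mp hSu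
  have hS1 : S⁻¹ * S = 1 := Matrix.nonsing_inv_mul S hSd
  have hS2 : S * S⁻¹ = 1 := Matrix.mul_nonsing_inv S hSd
  have hSinvH : (S⁻¹)ᴴ = S⁻¹ := by rw [Matrix.conjTranspose_nonsing_inv, hSH]
  have hU2 : (X * S⁻¹)ᴴ * (X * S⁻¹) = 1 := by
    rw [Matrix.conjTranspose_mul, hSinvH]
    calc S⁻¹ * Xᴴ * (X * S⁻¹) = S⁻¹ * (Xᴴ * X) * S⁻¹ := by simp only [Matrix.mul_assoc]
      _ = S⁻¹ * (S * S) * S⁻¹ := by rw [hSS]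
      _ = (S⁻¹ * S) * (S * S⁻¹) := by simp only [Matrix.mul_assoc]
      _ = 1 := by rw [hS1, hS2, Matrix.one_mul]
  have hU1 : (X * S⁻¹) * (X * S⁻¹)ᴴ = 1 := mul_eq_one_comm.mp hU2
  have hXinvEq : X⁻¹ = S⁻¹ * (X * S⁻¹)ᴴ := by
    apply Matrix.inv_eq_right_inv
    calc X * (S⁻¹ * (X * S⁻¹)ᴴ) = (X * S⁻¹) * (X * S⁻¹)ᴴ := by simp only [Matrix.mul_assoc]
      _ = 1 := hU1
  have transport : ∀ M : Matrix n n ℂ, M * S = S * M →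
      X * M * X⁻¹ = (X * S⁻¹) * M * (X * S⁻¹)ᴴ := by
    intro M hMS
    have hMS' : M * S⁻¹ = S⁻¹ * M := commute_inv hSu hMS
    rw [hXinvEq]
    calc X * M * (S⁻¹ * (X * S⁻¹)ᴴ) = X * (M * S⁻¹) * (X * S⁻¹)ᴴ := by
          simp only [Matrix.mul_assoc]
      _ = X * (S⁻¹ * M) * (X * S⁻¹)ᴴ := by rw [hMS']
      _ = (X * S⁻¹) * M * (X * S⁻¹)ᴴ := by simp only [Matrix.mul_assoc]
  have hGS : geo A B * S = S * geo A B :=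
    (geo_commute hA hB.posSemidef hAS.symm hBS.symm).symm
  rw [transport A hAS, transport B hBS, transport (geo A B) hGS]
  exact (geo_conj_unitary hA hB.posSemidef hU1 hU2).symm

end Aux2

theorem geo_mean_conj {n : Type*} [Fintype n] [DecidableEq n]
    (A B X : Matrix n n ℂ) (hA : A.PosDef) (hB : B.PosDef) (hX : IsUnit X)
    (h1 : (X * A * X⁻¹).PosDef) (h2 : (X * B * X⁻¹).PosDef) :
    X * geo A B * X⁻¹ = geo (X * A * X⁻¹) (X * B * X⁻¹) := by
  have hXd : IsUnit X.det := (Matrix.isUnit_iff_isUnit_det X).mp hX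
  have hXinv : X⁻¹ * X = 1 := Matrix.nonsing_inv_mul X hXd
  have hXXinvH : Xᴴ * X⁻¹ᴴ = 1 := by
    rw [← Matrix.conjTranspose_mul, hXinv, Matrix.conjTranspose_one]
  have hcomm : ∀ M : Matrix n n ℂ, M.IsHermitian → (X * M * X⁻¹).IsHermitian →
      M * (Xᴴ * X) = (Xᴴ * X) * M := by
    intro M hM hXM
    have e1 : X⁻¹ᴴ * M * Xᴴ = X * M * X⁻¹ := by
      conv_rhs => rw [← hXM.eq]
      rw [Matrix.conjTranspose_mul, Matrix.conjTranspose_mul, hM.eq, Matrix.mul_assoc]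
    have lhs_eq : Xᴴ * (X⁻¹ᴴ * M * Xᴴ) * X = M * (Xᴴ * X) := by
      calc Xᴴ * (X⁻¹ᴴ * M * Xᴴ) * X = (Xᴴ * X⁻¹ᴴ) * M * (Xᴴ * X) := by
            simp only [Matrix.mul_assoc]
        _ = M * (Xᴴ * X) := by rw [hXXinvH, Matrix.one_mul]
    have rhs_eq : Xᴴ * (X * M * X⁻¹) * X = (Xᴴ * X) * M := by
      calc Xᴴ * (X * M * X⁻¹) * X = (Xᴴ * X) * M * (X⁻¹ * X) := by
            simp only [Matrix.mul_assoc]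
        _ = (Xᴴ * X) * M := by rw [hXinv, Matrix.mul_one]
    rw [← lhs_eq, e1, rhs_eq]
  have hP : (Xᴴ * X).PosSemidef := Matrix.posSemidef_conjTranspose_mul_self X
  have hPu : IsUnit (Xᴴ * X) := by
    rw [Matrix.isUnit_iff_isUnit_det, Matrix.det_mul, Matrix.det_conjTranspose]
    exact hXd.star.mul hXd
  have hSu : IsUnit (msqrt (Xᴴ * X)) := msqrt_isUnit hP hPu
  exact main_aux hA hB hXd hSu (msqrt_posSemidef hP).isHermitian.eq (msqrt_mul_self hP)
    (commute_msqrt hP (hcomm A hA.isHermitian h1.isHermitian))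
    (commute_msqrt hP (hcomm B hB.isHermitian h2.isHermitian))
end
end
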